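/- Every 2-edge-connected graph G on n ≥ 4 vertices has an unsafe spanning connected subgraph with at most 2n − 4 edges. -/

import Mathlib

open SimpleGraph

/-- `T` is an unsafe spanning connected subgraph of `G` with unsafe edge set `Unsafe`:
`T` consists of edges of `G`, the graph `(V, T)` is spanning and connected, and it
remains connected after removal of any single unsafe edge of `T`. -/
def IsUSCS {V : Type*} (G : SimpleGraph V) (Unsafe : Set (Sym2 V)) (T : Set (Sym2 V)) : Prop :=
  T ⊆ G.edgeSet ∧ (SimpleGraph.fromEdgeSet T).Connected ∧
    ∀ e ∈ T, e ∈ Unsafe → (SimpleGraph.fromEdgeSet (T \ {e})).Connected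

/-- A graph is 2-edge-connected if it is connected and remains connected after
deletion of any single edge. -/
def TwoEdgeConnected {V : Type*} (G : SimpleGraph V) : Prop :=
  G.Connected ∧ ∀ e ∈ G.edgeSet, (G.deleteEdges {e}).Connected


section AuxiliaryLemmas


private lemma lset_ncard_le {α : Type*} [DecidableEq α] (l : List α) :
    Set.ncard {x | x ∈ l} ≤ l.length := by
  rw [← List.coe_toFinset, Set.ncard_coe_finset]
  exact List.toFinset_card_le l

private lemma lset_ncard_of_nodup {α : Type*} [DecidableEq α] {l : List α} (h : l.Nodup) :
    Set.ncard {x | x ∈ l} = l.length := by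
  rw [← List.coe_toFinset, Set.ncard_coe_finset]
  exact List.toFinset_card_of_nodup h

/-- Key reachability lemma: in a trail `r` from `a` to `b`, after deleting any single
edge `e`, every vertex on `r` can still reach `a` or `b` using only edges of `r`. -/
private lemma reach_aux {V : Type*} {G : SimpleGraph V} {a b : V} (r : G.Walk a b)
    (ht : r.IsTrail) (e : Sym2 V) :
    ∀ v ∈ r.support, (fromEdgeSet ({x | x ∈ r.edges} \ {e})).Reachable v a ∨
      (fromEdgeSet ({x | x ∈ r.edges} \ {e})).Reachable v b := by
  induction r with
  | nil =>
    intro v hv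
    simp only [SimpleGraph.Walk.support_nil, List.mem_singleton] at hv
    subst hv; exact Or.inl (Reachable.refl _)
  | @cons u c b h p ih =>
    intro v hv
    have hmono : fromEdgeSet ({x | x ∈ p.edges} \ {e}) ≤
        fromEdgeSet ({x | x ∈ (SimpleGraph.Walk.cons h p).edges} \ {e}) := by
      apply fromEdgeSet_mono
      intro x hx
      simp only [Set.mem_diff, Set.mem_setOf_eq, SimpleGraph.Walk.edges_cons,
        List.mem_cons] at hx ⊢
      exact ⟨Or.inr hx.1, hx.2⟩
    rw [SimpleGraph.Walk.support_cons, List.mem_cons] at hv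
    rcases hv with rfl | hv
    · exact Or.inl (Reachable.refl _)
    · rcases ih ht.of_cons v hv with hvc | hvb
      · -- v reaches c; now try to get from c to u (start) or to b
        by_cases he : s(u, c) = e
        · -- first edge is the deleted one; then e does not occur in p, so c reaches b along p
          have henp : e ∉ p.edges := by
            have := ht.edges_nodup
            rw [SimpleGraph.Walk.edges_cons, List.nodup_cons] at this
            rw [← he]; exact this.1
          have hcb : (fromEdgeSet ({x | x ∈ p.edges} \ {e})).Reachable c b := by
            refine ⟨p.transfer _ ?_⟩
            intro f hf
            rw [edgeSet_fromEdgeSet]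
            refine ⟨⟨hf, ?_⟩, ?_⟩
            · simp only [Set.mem_singleton_iff]
              rintro rfl; exact henp hf
            · exact G.not_isDiag_of_mem_edgeSet (p.edges_subset_edgeSet hf)
          exact Or.inr ((hvc.trans hcb).mono hmono)
        · -- first edge survives
          have hadj : (fromEdgeSet ({x | x ∈ (SimpleGraph.Walk.cons h p).edges} \ {e})).Adj c u := by
            rw [fromEdgeSet_adj]
            refine ⟨?_, h.ne.symm⟩
            refine ⟨?_, ?_⟩
            · simp only [Set.mem_setOf_eq, SimpleGraph.Walk.edges_cons, List.mem_cons]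
              left; exact Sym2.eq_swap
            · simp only [Set.mem_singleton_iff]
              rw [Sym2.eq_swap]; exact he
          exact Or.inl ((hvc.mono hmono).trans hadj.reachable)
      · exact Or.inr (hvb.mono hmono)

/-- From a path leaving `W`, extract an "ear tail": a path from `w ∉ W` to the first
vertex `b ∈ W`, all of whose other vertices avoid `W`. -/
private lemma extract_aux {V : Type*} {K : SimpleGraph V} {W : Set V} :
    ∀ {w a : V} (p : K.Walk w a), w ∉ W → a ∈ W → p.IsPath →
      ∃ b, b ∈ W ∧ ∃ q : K.Walk w b, q.IsPath ∧ (∀ v ∈ q.support, v ≠ b → v ∉ W) ∧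
        (∀ e ∈ q.edges, e ∈ p.edges) ∧ (∀ v ∈ q.support, v ∈ p.support) := by
  intro w a p
  induction p with
  | nil => intro hw ha _; exact absurd ha hw
  | @cons w c a h p ih =>
    intro hw ha hp
    by_cases hc : c ∈ W
    · refine ⟨c, hc, SimpleGraph.Walk.cons h SimpleGraph.Walk.nil, ?_, ?_, ?_, ?_⟩
      · rw [SimpleGraph.Walk.isPath_def]
        simp [h.ne]
      · intro v hv hvb
        simp only [SimpleGraph.Walk.support_cons, SimpleGraph.Walk.support_nil,
          List.mem_cons, List.mem_singleton] at hv
        rcases hv with rfl | hv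
        · exact hw
        · rcases hv with rfl | hv
          · exact absurd rfl hvb
          · simp at hv
      · intro e he
        simp only [SimpleGraph.Walk.edges_cons, SimpleGraph.Walk.edges_nil,
          List.mem_cons] at he ⊢
        tauto
      · intro v hv
        simp only [SimpleGraph.Walk.support_cons, SimpleGraph.Walk.support_nil,
          List.mem_cons, List.mem_singleton] at hv ⊢
        rcases hv with rfl | hv
        · left; rfl
        · rcases hv with rfl | hv
          · right; exact SimpleGraph.Walk.start_mem_support p
          · simp at hv
    · obtain ⟨b, hb, q', hq', hint, hedge, hsupp⟩ := ih hc ha hp.of_cons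
      refine ⟨b, hb, SimpleGraph.Walk.cons h q', ?_, ?_, ?_, ?_⟩
      · rw [SimpleGraph.Walk.isPath_def, SimpleGraph.Walk.support_cons, List.nodup_cons]
        constructor
        · intro hmem
          have hwp : w ∈ p.support := hsupp w hmem
          have hnd := hp.2
          rw [SimpleGraph.Walk.support_cons, List.nodup_cons] at hnd
          exact hnd.1 hwp
        · exact hq'.2
      · intro v hv hvb
        rw [SimpleGraph.Walk.support_cons, List.mem_cons] at hv
        rcases hv with rfl | hv
        · exact hw
        · exact hint v hv hvb
      · intro e he
        rw [SimpleGraph.Walk.edges_cons, List.mem_cons] at he ⊢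
        rcases he with rfl | he
        · left; rfl
        · right; exact hedge e he
      · intro v hv
        rw [SimpleGraph.Walk.support_cons, List.mem_cons] at hv ⊢
        rcases hv with rfl | hv
        · left; rfl
        · right; exact hsupp v hv

private lemma boundary_aux {V : Type*} {G : SimpleGraph V} {W : Set V} :
    ∀ {x y : V} (_ : G.Walk x y), x ∈ W → y ∉ W → ∃ a w, a ∈ W ∧ w ∉ W ∧ G.Adj a w := by
  intro x y p
  induction p with
  | nil => intro hx hy; exact absurd hx hy
  | @cons x c y h p ih =>
    intro hx hy
    by_cases hc : c ∈ W
    · exact ih hc hy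
    · exact ⟨x, c, hx, hc, h⟩


variable {V : Type*}


private def InvC (G : SimpleGraph V) (W : Set V) (T : Set (Sym2 V)) : Prop :=
  T ⊆ G.edgeSet ∧
    ∀ e : Sym2 V, ∀ u ∈ W, ∀ v ∈ W, (fromEdgeSet (T \ {e})).Reachable u v

/-- Adding an "ear" `a — w — ⋯ — b` (with interior outside `W`) to `(W, T)`. -/
private lemma step_aux [Fintype V] [DecidableEq V] {G : SimpleGraph V} {W : Set V}
    {T : Set (Sym2 V)} (hI : InvC G W T) {a w b : V} (haW : a ∈ W) (hbW : b ∈ W)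
    (haw : G.Adj a w) (hwW : w ∉ W) (q : G.Walk w b) (hq : q.IsPath)
    (hqW : ∀ v ∈ q.support, v ≠ b → v ∉ W) (hnq : s(a, w) ∉ q.edges) :
    InvC G (W ∪ {x | x ∈ (SimpleGraph.Walk.cons haw q).support})
      (T ∪ {x | x ∈ (SimpleGraph.Walk.cons haw q).edges}) ∧
    (T ∪ {x | x ∈ (SimpleGraph.Walk.cons haw q).edges}).ncard ≤ T.ncard + q.length + 1 ∧
    W.ncard + q.length ≤ (W ∪ {x | x ∈ (SimpleGraph.Walk.cons haw q).support}).ncard ∧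
    w ∈ W ∪ {x | x ∈ (SimpleGraph.Walk.cons haw q).support} := by
  set r : G.Walk a b := SimpleGraph.Walk.cons haw q with hr
  have hrtrail : r.IsTrail := by
    rw [SimpleGraph.Walk.isTrail_def, hr, SimpleGraph.Walk.edges_cons, List.nodup_cons]
    exact ⟨hnq, hq.isTrail.edges_nodup⟩
  set W' : Set V := W ∪ {x | x ∈ r.support} with hW'
  set T' : Set (Sym2 V) := T ∪ {x | x ∈ r.edges} with hT'
  have hmono1 : ∀ e : Sym2 V, fromEdgeSet (T \ {e}) ≤ fromEdgeSet (T' \ {e}) := fun e =>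
    fromEdgeSet_mono (Set.diff_subset_diff_left Set.subset_union_left)
  have hmono2 : ∀ e : Sym2 V, fromEdgeSet ({x | x ∈ r.edges} \ {e}) ≤ fromEdgeSet (T' \ {e}) :=
    fun e => fromEdgeSet_mono (Set.diff_subset_diff_left Set.subset_union_right)
  have hreach : ∀ e : Sym2 V, ∀ x ∈ W', (fromEdgeSet (T' \ {e})).Reachable x a := by
    intro e x hx
    rcases hx with hx | hx
    · exact (hI.2 e x hx a haW).mono (hmono1 e)
    · rcases reach_aux r hrtrail e x hx with h1 | h1
      · exact h1.mono (hmono2 e)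
      · exact (h1.mono (hmono2 e)).trans ((hI.2 e b hbW a haW).mono (hmono1 e))
  refine ⟨⟨?_, ?_⟩, ?_, ?_, ?_⟩
  · intro e he
    rcases he with he | he
    · exact hI.1 he
    · exact r.edges_subset_edgeSet he
  · intro e u hu v hv
    exact (hreach e u hu).trans (hreach e v hv).symm
  · calc T'.ncard ≤ T.ncard + Set.ncard {x | x ∈ r.edges} := Set.ncard_union_le _ _
      _ ≤ T.ncard + r.edges.length := by
          have := lset_ncard_le (α := Sym2 V) r.edges
          omega
      _ = T.ncard + q.length + 1 := by
          rw [SimpleGraph.Walk.length_edges, hr, SimpleGraph.Walk.length_cons]; omega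
  · -- W count
    have hWsub : W ⊆ W' := Set.subset_union_left
    have hkey : ({x | x ∈ q.support} \ {b} : Set V) ⊆ W' \ W := by
      intro v hv
      obtain ⟨hv1, hv2⟩ := hv
      simp only [Set.mem_singleton_iff] at hv2
      constructor
      · right
        simp only [Set.mem_setOf_eq, hr, SimpleGraph.Walk.support_cons, List.mem_cons]
        right; exact hv1
      · exact hqW v hv1 hv2
    have hcard1 : ({x | x ∈ q.support} \ {b} : Set V).ncard = q.length := by
      have hnd : q.support.Nodup := hq.2
      have h1 : Set.ncard {x | x ∈ q.support} = q.length + 1 := by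
        rw [lset_ncard_of_nodup hnd, SimpleGraph.Walk.length_support]
      have h2 : b ∈ ({x | x ∈ q.support} : Set V) := q.end_mem_support
      rw [Set.ncard_diff_singleton_of_mem h2, h1]
      omega
    have hcard2 : (W' \ W).ncard + W.ncard = W'.ncard :=
      Set.ncard_diff_add_ncard_of_subset hWsub (Set.toFinite _)
    have hcard3 : ({x | x ∈ q.support} \ {b} : Set V).ncard ≤ (W' \ W).ncard :=
      Set.ncard_le_ncard hkey (Set.toFinite _)
    omega
  · right
    simp only [Set.mem_setOf_eq, hr, SimpleGraph.Walk.support_cons, List.mem_cons]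
    right; exact q.start_mem_support



private lemma walk_len0 {V : Type*} {G : SimpleGraph V} {u v : V} (p : G.Walk u v)
    (h : p.length = 0) : u = v := by
  cases p with
  | nil => rfl
  | cons h q => simp [SimpleGraph.Walk.length_cons] at h

private lemma grow_aux [Fintype V] [DecidableEq V] {G : SimpleGraph V} (hGc : G.Connected)
    (h2 : ∀ e ∈ G.edgeSet, (G.deleteEdges {e}).Connected) :
    ∀ (k : ℕ) (W : Set V) (T : Set (Sym2 V)), (Set.univ \ W).ncard ≤ k → W.Nonempty →
      InvC G W T → T.ncard + 4 ≤ 2 * W.ncard →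
      ∃ T' : Set (Sym2 V), T' ⊆ G.edgeSet ∧
        (∀ e : Sym2 V, ∀ u v : V, (fromEdgeSet (T' \ {e})).Reachable u v) ∧
        T'.ncard + 4 ≤ 2 * Fintype.card V := by
  intro k
  induction k with
  | zero =>
    intro W T hk _ hI hcard
    have hWuniv : W = Set.univ := by
      have h0 : (Set.univ \ W).ncard = 0 := Nat.le_zero.mp hk
      have hempty := (Set.ncard_eq_zero (Set.toFinite _)).mp h0
      have hsub : (Set.univ : Set V) ⊆ W := Set.diff_eq_empty.mp hempty
      exact (Set.subset_univ W).antisymm hsub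
    subst hWuniv
    refine ⟨T, hI.1, fun e u v => hI.2 e u trivial v trivial, ?_⟩
    rwa [Set.ncard_univ, Nat.card_eq_fintype_card] at hcard
  | succ k ih =>
    intro W T hk hne hI hcard
    by_cases hWuniv : W = Set.univ
    · subst hWuniv
      refine ⟨T, hI.1, fun e u v => hI.2 e u trivial v trivial, ?_⟩
      rwa [Set.ncard_univ, Nat.card_eq_fintype_card] at hcard
    · -- find a boundary edge a—w with a ∈ W, w ∉ W
      obtain ⟨u, hu⟩ : ∃ u : V, u ∉ W := by
        by_contra hall
        push_neg at hall
        exact hWuniv (Set.eq_univ_iff_forall.mpr hall)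
      obtain ⟨w₀, hw₀⟩ := hne
      obtain ⟨p⟩ := hGc.preconnected w₀ u
      obtain ⟨a, w, haW, hwW, haw⟩ := boundary_aux p hw₀ hu
      -- the edge a—w lies on a cycle: find a path w → a avoiding it
      have hKconn := h2 s(a, w) ((G.mem_edgeSet).mpr haw)
      obtain ⟨p₁⟩ := hKconn.preconnected w a
      have hP : (p₁.toPath : (G.deleteEdges {s(a, w)}).Walk w a).IsPath := p₁.toPath.2
      obtain ⟨b, hbW, qK, hqK, hint, _, _⟩ := extract_aux (W := W) _ hwW haW hP
      -- transfer to G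
      have hqKedges : ∀ e ∈ qK.edges, e ∈ G.edgeSet := by
        intro e he
        have := qK.edges_subset_edgeSet he
        rw [edgeSet_deleteEdges] at this
        exact this.1
      set qG : G.Walk w b := qK.transfer G hqKedges with hqG
      have hqGsupp : qG.support = qK.support := qK.support_transfer hqKedges
      have hqGedges : qG.edges = qK.edges := qK.edges_transfer hqKedges
      have hqGpath : qG.IsPath := by
        rw [SimpleGraph.Walk.isPath_def, hqGsupp]
        exact hqK.2
      have hqGW : ∀ v ∈ qG.support, v ≠ b → v ∉ W := by
        rw [hqGsupp]; exact hint
      have hnq : s(a, w) ∉ qG.edges := by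
        rw [hqGedges]
        intro hmem
        have := qK.edges_subset_edgeSet hmem
        rw [edgeSet_deleteEdges] at this
        exact this.2 rfl
      have hqlen : 1 ≤ qG.length := by
        by_contra hlen
        push_neg at hlen
        have : w = b := walk_len0 qG (by omega)
        exact hwW (this ▸ hbW)
      obtain ⟨hI', hT', hW', hwmem⟩ := step_aux hI haW hbW haw hwW qG hqGpath hqGW hnq
      set W' := W ∪ {x | x ∈ (SimpleGraph.Walk.cons haw qG).support} with hW'def
      set T' := T ∪ {x | x ∈ (SimpleGraph.Walk.cons haw qG).edges} with hT'def
      have hksub : Set.univ \ W' ⊆ (Set.univ \ W) \ {w} := by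
        intro x hx
        refine ⟨⟨trivial, fun hxW => hx.2 (Set.subset_union_left hxW)⟩, ?_⟩
        simp only [Set.mem_singleton_iff]
        rintro rfl
        exact hx.2 hwmem
      have hk' : (Set.univ \ W').ncard ≤ k := by
        have h1 : ((Set.univ \ W) \ {w} : Set V).ncard = (Set.univ \ W).ncard - 1 :=
          Set.ncard_diff_singleton_of_mem ⟨trivial, hwW⟩
        have h2' : (Set.univ \ W).ncard ≥ 1 :=
          (Set.ncard_pos (Set.toFinite _)).mpr ⟨w, trivial, hwW⟩
        have h3 : (Set.univ \ W').ncard ≤ ((Set.univ \ W) \ {w} : Set V).ncard :=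
          Set.ncard_le_ncard hksub (Set.toFinite _)
        omega
      have hcard' : T'.ncard + 4 ≤ 2 * W'.ncard := by omega
      exact ih W' T' hk' ⟨a, Set.subset_union_left haW⟩ hI' hcard'



/-- Every cycle yields the invariant on its support/edges. -/
private lemma cycle_invc {G : SimpleGraph V} {v : V} (c : G.Walk v v) (hc : c.IsCycle) :
    InvC G {x | x ∈ c.support} {e | e ∈ c.edges} := by
  have htrail : c.IsTrail := ((SimpleGraph.Walk.isCycle_def c).mp hc).1
  refine ⟨fun e he => c.edges_subset_edgeSet he, ?_⟩
  intro e u hu w hw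
  have h1 := reach_aux c htrail e u hu
  have h2 := reach_aux c htrail e w hw
  have hu' : (fromEdgeSet ({x | x ∈ c.edges} \ {e})).Reachable u v := by tauto
  have hw' : (fromEdgeSet ({x | x ∈ c.edges} \ {e})).Reachable w v := by tauto
  exact hu'.trans hw'.symm

private lemma cycle_W_ge [DecidableEq V] {G : SimpleGraph V} {v : V} (c : G.Walk v v)
    (hc : c.IsCycle) : c.length ≤ Set.ncard {x | x ∈ c.support} := by
  have hnd : c.support.tail.Nodup := ((SimpleGraph.Walk.isCycle_def c).mp hc).2.2
  have hsub : ({x | x ∈ c.support.tail} : Set V) ⊆ {x | x ∈ c.support} := fun x hx =>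
    List.mem_of_mem_tail hx
  have h1 : Set.ncard {x | x ∈ c.support.tail} = c.support.tail.length :=
    lset_ncard_of_nodup hnd
  have h2 : c.support.tail.length = c.length := by
    have := c.length_support
    simp [List.length_tail, this]
  have := Set.ncard_le_ncard hsub c.support.finite_toSet
  omega

private lemma cycle_T_le [DecidableEq V] {G : SimpleGraph V} {u v : V} (c : G.Walk u v) :
    Set.ncard {e | e ∈ c.edges} ≤ c.length := by
  have := lset_ncard_le (α := Sym2 V) c.edges
  rw [SimpleGraph.Walk.length_edges] at this
  exact this

/-- From an edge, a cycle through it (using 2-edge-connectivity). -/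
private lemma cycle_of_adj [DecidableEq V] {G : SimpleGraph V}
    (h2 : ∀ e ∈ G.edgeSet, (G.deleteEdges {e}).Connected) {x y : V} (hxy : G.Adj x y) :
    ∃ P : G.Walk y x, P.IsPath ∧ s(x, y) ∉ P.edges ∧ (SimpleGraph.Walk.cons hxy P).IsCycle := by
  have hK := h2 s(x, y) ((G.mem_edgeSet).mpr hxy)
  obtain ⟨p₁⟩ := hK.preconnected y x
  set PK := p₁.toPath with hPK
  have hPKedges : ∀ e ∈ (PK : (G.deleteEdges {s(x,y)}).Walk y x).edges, e ∈ G.edgeSet := by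
    intro e he
    have := SimpleGraph.Walk.edges_subset_edgeSet _ he
    rw [edgeSet_deleteEdges] at this
    exact this.1
  refine ⟨(PK : (G.deleteEdges {s(x,y)}).Walk y x).transfer G hPKedges, ?_, ?_, ?_⟩
  · rw [SimpleGraph.Walk.isPath_def, SimpleGraph.Walk.support_transfer]
    exact PK.2.2
  · rw [SimpleGraph.Walk.edges_transfer]
    intro hmem
    have := SimpleGraph.Walk.edges_subset_edgeSet _ hmem
    rw [edgeSet_deleteEdges] at this
    exact this.2 rfl
  · refine SimpleGraph.Path.cons_isCycle ⟨_, ?_⟩ hxy ?_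
    · rw [SimpleGraph.Walk.isPath_def, SimpleGraph.Walk.support_transfer]
      exact PK.2.2
    · rw [SimpleGraph.Walk.edges_transfer]
      intro hmem
      have := SimpleGraph.Walk.edges_subset_edgeSet _ hmem
      rw [edgeSet_deleteEdges] at this
      exact this.2 rfl

private lemma path2_decomp {G : SimpleGraph V} {u v : V} (p : G.Walk u v)
    (h : p.length = 2) :
    ∃ (t : V) (h1 : G.Adj u t) (h2 : G.Adj t v),
      p = SimpleGraph.Walk.cons h1 (SimpleGraph.Walk.cons h2 SimpleGraph.Walk.nil) := by
  cases p with
  | nil => simp at h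
  | cons h1 p' =>
    cases p' with
    | nil => simp at h
    | cons h2 p'' =>
      cases p'' with
      | nil => exact ⟨_, h1, h2, rfl⟩
      | cons h3 p''' => simp [SimpleGraph.Walk.length_cons] at h

end AuxiliaryLemmas

theorem stmt_10 {V : Type*} [Fintype V] (G : SimpleGraph V) (S U : Set (Sym2 V))
    (hSU : S ∪ U = G.edgeSet) (hdisj : Disjoint S U)
    (h2ec : TwoEdgeConnected G) (hn : 4 ≤ Fintype.card V) :
    ∃ T : Set (Sym2 V), IsUSCS G U T ∧ T.ncard ≤ 2 * Fintype.card V - 4 := by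
  classical
  obtain ⟨hGc, h2⟩ := h2ec
  have hV : Nonempty V := Fintype.card_pos_iff.mp (by omega)
  -- there is an edge
  obtain ⟨x0, y0, hxy0⟩ : ∃ x y : V, G.Adj x y := by
    obtain ⟨x⟩ := hV
    have hy : ∃ y : V, y ≠ x := by
      by_contra hno
      push_neg at hno
      have : Fintype.card V ≤ 1 := Fintype.card_le_one_iff.mpr fun a b => by rw [hno a, hno b]
      omega
    obtain ⟨y, hyx⟩ := hy
    obtain ⟨p⟩ := hGc.preconnected y x
    cases p with
    | nil => exact absurd rfl hyx
    | cons h _ => exact ⟨_, _, h⟩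
  -- it suffices to find a good base configuration
  suffices hbase : ∃ (W₀ : Set V) (T₀ : Set (Sym2 V)), W₀.Nonempty ∧ InvC G W₀ T₀ ∧
      T₀.ncard + 4 ≤ 2 * W₀.ncard by
    obtain ⟨W₀, T₀, hne₀, hI₀, hcard₀⟩ := hbase
    obtain ⟨T', hsub', hconn', hbound'⟩ :=
      grow_aux hGc h2 (Set.univ \ W₀).ncard W₀ T₀ le_rfl hne₀ hI₀ hcard₀
    refine ⟨T', ⟨hsub', ?_, ?_⟩, ?_⟩
    · rw [connected_iff]
      exact ⟨fun u v => (hconn' s(x0, x0) u v).mono (fromEdgeSet_mono Set.diff_subset), hV⟩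
    · intro e _ _
      rw [connected_iff]
      exact ⟨fun u v => hconn' e u v, hV⟩
    · omega
  by_cases hbig : ∃ (v : V) (c : G.Walk v v), c.IsCycle ∧ 4 ≤ c.length
  · -- start from a long cycle
    obtain ⟨v, c, hc, hlen⟩ := hbig
    refine ⟨{x | x ∈ c.support}, {e | e ∈ c.edges}, ⟨v, c.start_mem_support⟩,
      cycle_invc c hc, ?_⟩
    have h1 := cycle_T_le c
    have h2' := cycle_W_ge c hc
    omega
  · -- all cycles are triangles
    push_neg at hbig
    have hsmall : ∀ (v : V) (c : G.Walk v v), c.IsCycle → c.length ≤ 3 := by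
      intro v c hc
      have := hbig v c hc
      omega
    -- triangle through the edge x0 y0
    obtain ⟨P0, hP0path, hP0ne, hc0⟩ := cycle_of_adj h2 hxy0
    have hP0len : P0.length = 2 := by
      have hle := hsmall _ _ hc0
      have hge := hc0.three_le_length
      rw [SimpleGraph.Walk.length_cons] at hle hge
      omega
    obtain ⟨s1, k1, k2, rfl⟩ := path2_decomp P0 hP0len
    -- distinctness of the triangle vertices
    have hnd := ((SimpleGraph.Walk.isCycle_def _).mp hc0).2.2
    simp only [SimpleGraph.Walk.support_cons, SimpleGraph.Walk.support_nil, List.tail_cons,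
      List.nodup_cons, List.mem_cons, List.mem_singleton, List.not_mem_nil] at hnd
    have hy0s1 : y0 ≠ s1 := fun h => hnd.1 (Or.inl h)
    have hy0x0 : y0 ≠ x0 := fun h => hnd.1 (Or.inr (Or.inl h))
    have hs1x0 : s1 ≠ x0 := fun h => hnd.2.1 (Or.inl h)
    -- the triangle's support as a set
    have hWeq : {x | x ∈ (SimpleGraph.Walk.cons hxy0
        (SimpleGraph.Walk.cons k1 (SimpleGraph.Walk.cons k2 SimpleGraph.Walk.nil))).support}
        = ({x0, y0, s1} : Set V) := by
      ext z
      simp only [Set.mem_setOf_eq, SimpleGraph.Walk.support_cons,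
        SimpleGraph.Walk.support_nil, List.mem_cons, List.mem_singleton,
        Set.mem_insert_iff, Set.mem_singleton_iff, List.not_mem_nil]
      tauto
    have hI₀ : InvC G ({x0, y0, s1} : Set V) {e | e ∈ (SimpleGraph.Walk.cons hxy0
        (SimpleGraph.Walk.cons k1 (SimpleGraph.Walk.cons k2 SimpleGraph.Walk.nil))).edges} := by
      rw [← hWeq]
      exact cycle_invc _ hc0
    have hW0card : ({x0, y0, s1} : Set V).ncard = 3 := by
      rw [Set.ncard_insert_of_notMem (by simp [hy0x0.symm, hs1x0.symm] : x0 ∉ ({y0, s1} : Set V)),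
        Set.ncard_insert_of_notMem (by simp [hy0s1] : y0 ∉ ({s1} : Set V)),
        Set.ncard_singleton]
    -- a vertex outside the triangle
    obtain ⟨u, hu⟩ : ∃ u : V, u ∉ ({x0, y0, s1} : Set V) := by
      by_contra hall
      push_neg at hall
      have huniv : (Set.univ : Set V) ⊆ ({x0, y0, s1} : Set V) := fun z _ => hall z
      have := Set.ncard_le_ncard huniv (Set.toFinite _)
      rw [Set.ncard_univ, Nat.card_eq_fintype_card, hW0card] at this
      omega
    obtain ⟨p2⟩ := hGc.preconnected x0 u
    obtain ⟨a, w, haW, hwW, haw⟩ :=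
      boundary_aux (W := ({x0, y0, s1} : Set V)) p2 (by simp) hu
    -- a triangle through the edge a w
    obtain ⟨P1, hP1path, hP1ne, hc1⟩ := cycle_of_adj h2 haw
    have hP1len : P1.length = 2 := by
      have hle := hsmall _ _ hc1
      have hge := hc1.three_le_length
      rw [SimpleGraph.Walk.length_cons] at hle hge
      omega
    obtain ⟨t, k1', k2', rfl⟩ := path2_decomp P1 hP1len
    have hnd1 := ((SimpleGraph.Walk.isCycle_def _).mp hc1).2.2
    simp only [SimpleGraph.Walk.support_cons, SimpleGraph.Walk.support_nil, List.tail_cons,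
      List.nodup_cons, List.mem_cons, List.mem_singleton, List.not_mem_nil] at hnd1
    have hwt : w ≠ t := fun h => hnd1.1 (Or.inl h)
    have hwa : w ≠ a := fun h => hnd1.1 (Or.inr (Or.inl h))
    have hta : t ≠ a := fun h => hnd1.2.1 (Or.inl h)
    by_cases htW : t ∈ ({x0, y0, s1} : Set V)
    · -- contradiction: a 4-cycle exists
      exfalso
      have hadj3 : ∀ p q : V, p ∈ ({x0, y0, s1} : Set V) → q ∈ ({x0, y0, s1} : Set V) →
          p ≠ q → G.Adj p q := by
        intro p q hp hq hpq
        simp only [Set.mem_insert_iff, Set.mem_singleton_iff] at hp hq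
        rcases hp with rfl | rfl | rfl <;> rcases hq with rfl | rfl | rfl <;>
          first
            | exact absurd rfl hpq
            | exact hxy0 | exact hxy0.symm | exact k1 | exact k1.symm
            | exact k2 | exact k2.symm
      have hm : ∃ m, m ∈ ({x0, y0, s1} : Set V) ∧ m ≠ a ∧ m ≠ t := by
        have haW' := haW
        have htW' := htW
        simp only [Set.mem_insert_iff, Set.mem_singleton_iff] at haW' htW'
        rcases haW' with rfl | rfl | rfl <;> rcases htW' with rfl | rfl | rfl <;>
          first
            | exact absurd rfl hta
            | exact absurd rfl hta.symm
            | exact ⟨s1, by simp, hs1x0, hy0s1.symm⟩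
            | exact ⟨s1, by simp, hy0s1.symm, hs1x0⟩
            | exact ⟨y0, by simp, hy0x0, hy0s1⟩
            | exact ⟨y0, by simp, hy0s1, hy0x0⟩
            | exact ⟨x0, by simp, hy0x0.symm, hs1x0.symm⟩
            | exact ⟨x0, by simp, hs1x0.symm, hy0x0.symm⟩
      obtain ⟨m, hmW, hma, hmt⟩ := hm
      have hwm : w ≠ m := fun h => hwW (h ▸ hmW)
      have hadjma : G.Adj m a := hadj3 m a hmW haW hma
      have hadjtm : G.Adj t m := hadj3 t m htW hmW fun h => hmt h.symm
      set c4 : G.Walk m m := SimpleGraph.Walk.cons hadjma (SimpleGraph.Walk.cons haw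
        (SimpleGraph.Walk.cons k1' (SimpleGraph.Walk.cons hadjtm SimpleGraph.Walk.nil)))
        with hc4def
      have ham : a ≠ m := hma.symm
      have htm : t ≠ m := hmt.symm
      have hmw : m ≠ w := hwm.symm
      have haw' : a ≠ w := haw.ne
      have hat : a ≠ t := hta.symm
      have htw : t ≠ w := hwt.symm
      have hwa' : w ≠ a := hwa
      have hc4 : c4.IsCycle := by
        rw [SimpleGraph.Walk.isCycle_def]
        refine ⟨?_, by simp [hc4def], ?_⟩
        · rw [SimpleGraph.Walk.isTrail_def]
          simp only [hc4def, SimpleGraph.Walk.edges_cons, SimpleGraph.Walk.edges_nil,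
            List.nodup_cons, List.mem_cons, List.not_mem_nil, List.mem_singleton,
            List.nodup_nil, Sym2.eq_iff]
          tauto
        · simp only [hc4def, SimpleGraph.Walk.support_cons, SimpleGraph.Walk.support_nil,
            List.tail_cons, List.nodup_cons, List.mem_cons, List.mem_singleton,
            List.not_mem_nil, List.nodup_nil]
          tauto
      have hle3 := hsmall m c4 hc4
      have : c4.length = 4 := by simp [hc4def]
      omega
    · -- attach the second triangle as an ear
      set q : G.Walk w a := SimpleGraph.Walk.cons k1' (SimpleGraph.Walk.cons k2'
        SimpleGraph.Walk.nil) with hqdef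
      have hqW : ∀ v ∈ q.support, v ≠ a → v ∉ ({x0, y0, s1} : Set V) := by
        intro v hv hva
        simp only [hqdef, SimpleGraph.Walk.support_cons, SimpleGraph.Walk.support_nil,
          List.mem_cons, List.mem_singleton, List.not_mem_nil] at hv
        rcases hv with rfl | rfl | rfl | h
        · exact hwW
        · exact htW
        · exact absurd rfl hva
        · exact h.elim
      obtain ⟨hI', hT', hW', _⟩ := step_aux hI₀ haW haW haw hwW q hP1path hqW hP1ne
      refine ⟨_, _, ⟨a, Or.inl haW⟩, hI', ?_⟩
      have hT0le : Set.ncard {e | e ∈ (SimpleGraph.Walk.cons hxy0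
          (SimpleGraph.Walk.cons k1 (SimpleGraph.Walk.cons k2 SimpleGraph.Walk.nil))).edges}
          ≤ 3 := by
        have := cycle_T_le (SimpleGraph.Walk.cons hxy0
          (SimpleGraph.Walk.cons k1 (SimpleGraph.Walk.cons k2 SimpleGraph.Walk.nil)))
        simpa using this
      have hqlen : q.length = 2 := by simp [hqdef]
      omega
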